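/- In the setting of the four-row commutative diagram described in the context, there is an isomorphism of R-modules ker(f̃) ≅ ker(δ'), i.e. the kernel of f̃ : Ã → B̃ is isomorphic to the kernel of δ' : D' → D. -/
import Mathlib


theorem kernel_iso_of_diagram {R : Type*} [Ring R]
    {A A'' At B' B B'' Bt C' C C'' Ct D' D D'' : Type*}
    [AddCommGroup A] [AddCommGroup A''] [AddCommGroup At]
    [AddCommGroup B'] [AddCommGroup B] [AddCommGroup B''] [AddCommGroup Bt]
    [AddCommGroup C'] [AddCommGroup C] [AddCommGroup C''] [AddCommGroup Ct]
    [AddCommGroup D'] [AddCommGroup D] [AddCommGroup D'']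
    [Module R A] [Module R A''] [Module R At]
    [Module R B'] [Module R B] [Module R B''] [Module R Bt]
    [Module R C'] [Module R C] [Module R C''] [Module R Ct]
    [Module R D'] [Module R D] [Module R D'']
    (α : A →ₗ[R] A'') (α'' : A'' →ₗ[R] At)
    (β' : B' →ₗ[R] B) (β : B →ₗ[R] B'') (β'' : B'' →ₗ[R] Bt)
    (γ' : C' →ₗ[R] C) (γ : C →ₗ[R] C'') (γ'' : C'' →ₗ[R] Ct)
    (δ' : D' →ₗ[R] D) (δ : D →ₗ[R] D'')
    (f : A →ₗ[R] B) (f'' : A'' →ₗ[R] B'') (ftil : At →ₗ[R] Bt)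
    (g' : B' →ₗ[R] C') (g : B →ₗ[R] C) (g'' : B'' →ₗ[R] C'') (gtil : Bt →ₗ[R] Ct)
    (h' : C' →ₗ[R] D') (h : C →ₗ[R] D) (h'' : C'' →ₗ[R] D'')
    -- exactness of row 1 : A → A'' → At → 0
    (row1 : LinearMap.ker α'' = LinearMap.range α)
    (hα'' : Function.Surjective α'')
    -- exactness of row 2 : B' → B → B'' → Bt → 0
    (row2a : LinearMap.ker β = LinearMap.range β')
    (row2b : LinearMap.ker β'' = LinearMap.range β)
    (hβ'' : Function.Surjective β'')
    -- exactness of row 3 : 0 → C' → C → C'' → Ct → 0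
    (hγ' : Function.Injective γ')
    (row3a : LinearMap.ker γ = LinearMap.range γ')
    (row3b : LinearMap.ker γ'' = LinearMap.range γ)
    (hγ'' : Function.Surjective γ'')
    -- exactness of column 1 : B' → C' → D' → 0
    (col1 : LinearMap.ker h' = LinearMap.range g')
    (hh' : Function.Surjective h')
    -- exactness of column 2 : A → B → C → D → 0
    (col2a : LinearMap.ker g = LinearMap.range f)
    (col2b : LinearMap.ker h = LinearMap.range g)
    (hh : Function.Surjective h)
    -- exactness of column 3 : 0 → A'' → B'' → C'' → D'' → 0
    (hf'' : Function.Injective f'')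
    (col3a : LinearMap.ker g'' = LinearMap.range f'')
    (col3b : LinearMap.ker h'' = LinearMap.range g'')
    (hh'' : Function.Surjective h'')
    -- commutativity of all squares
    (sq1 : f'' ∘ₗ α = β ∘ₗ f) (sq2 : ftil ∘ₗ α'' = β'' ∘ₗ f'')
    (sq3 : g ∘ₗ β' = γ' ∘ₗ g') (sq4 : g'' ∘ₗ β = γ ∘ₗ g)
    (sq5 : gtil ∘ₗ β'' = γ'' ∘ₗ g'')
    (sq6 : h ∘ₗ γ' = δ' ∘ₗ h') (sq7 : h'' ∘ₗ γ = δ ∘ₗ h) :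
    Nonempty (↥(LinearMap.ker ftil) ≃ₗ[R] ↥(LinearMap.ker δ')) := by
  classical
  -- pointwise commutativity
  have sq1' : ∀ a, f'' (α a) = β (f a) := fun a => LinearMap.congr_fun sq1 a
  have sq2' : ∀ a, ftil (α'' a) = β'' (f'' a) := fun a => LinearMap.congr_fun sq2 a
  have sq3' : ∀ b, g (β' b) = γ' (g' b) := fun b => LinearMap.congr_fun sq3 b
  have sq4' : ∀ b, g'' (β b) = γ (g b) := fun b => LinearMap.congr_fun sq4 b
  have sq6' : ∀ c, h (γ' c) = δ' (h' c) := fun c => LinearMap.congr_fun sq6 c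
  set Rel : At → D' → Prop := fun atl d' =>
    ∃ a'' b c', α'' a'' = atl ∧ β b = f'' a'' ∧ γ' c' = g b ∧ h' c' = d' with hRel
  have radd : ∀ atl1 atl2 d₁ d₂, Rel atl1 d₁ → Rel atl2 d₂ → Rel (atl1 + atl2) (d₁ + d₂) := by
    rintro atl1 atl2 d₁ d₂ ⟨a1, b1, c1, e1, e2, e3, e4⟩ ⟨a2, b2, c2, u1, u2, u3, u4⟩
    exact ⟨a1 + a2, b1 + b2, c1 + c2, by simp [e1, u1], by simp [e2, u2],
      by simp [e3, u3], by simp [e4, u4]⟩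
  have rsmul : ∀ (r : R) atl d, Rel atl d → Rel (r • atl) (r • d) := by
    rintro r atl d ⟨a1, b1, c1, e1, e2, e3, e4⟩
    exact ⟨r • a1, r • b1, r • c1, by simp [e1], by simp [e2], by simp [e3], by simp [e4]⟩
  have rneg : ∀ atl d, Rel atl d → Rel (-atl) (-d) := by
    intro atl d hr
    simpa [neg_one_smul] using rsmul (-1 : R) atl d hr
  -- single-valuedness at 0
  have wd0 : ∀ d, Rel 0 d → d = 0 := by
    rintro d ⟨a'', b, c', e1, e2, e3, e4⟩
    have ha : a'' ∈ LinearMap.range α := by rw [← row1]; exact e1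
    obtain ⟨a, ha⟩ := ha
    have hb : b - f a ∈ LinearMap.range β' := by
      rw [← row2a, LinearMap.mem_ker, map_sub, e2, ← ha, sq1', sub_self]
    obtain ⟨b', hb'⟩ := hb
    have hgfa : g (f a) = 0 := by
      have : f a ∈ LinearMap.ker g := by rw [col2a]; exact ⟨a, rfl⟩
      exact this
    have hgb : g b = γ' (g' b') := by
      have hsplit : g b = g (f a) + g (b - f a) := by rw [← map_add]; congr 1; abel
      rw [hsplit, hgfa, zero_add, ← hb', sq3']
    have hc' : c' = g' b' := hγ' (by rw [e3, hgb])
    have hker : c' ∈ LinearMap.ker h' := by rw [col1, hc']; exact ⟨b', rfl⟩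
    rw [← e4]; exact hker
  have wd : ∀ atl d₁ d₂, Rel atl d₁ → Rel atl d₂ → d₁ = d₂ := by
    intro atl d₁ d₂ h1 h2
    have h3 := wd0 (d₁ + -d₂) (by
      have := radd atl (-atl) d₁ (-d₂) h1 (rneg atl d₂ h2)
      simpa using this)
    have : d₁ - d₂ = 0 := by simpa [sub_eq_add_neg] using h3
    exact sub_eq_zero.mp this
  -- injectivity of the induced map
  have inj0 : ∀ atl, Rel atl 0 → atl = 0 := by
    rintro atl ⟨a'', b, c', e1, e2, e3, e4⟩
    have hc' : c' ∈ LinearMap.range g' := by rw [← col1]; exact e4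
    obtain ⟨b', hb'⟩ := hc'
    have hg : g (b - β' b') = 0 := by
      rw [map_sub, sq3', hb', ← e3, sub_self]
    have hmem : b - β' b' ∈ LinearMap.range f := by rw [← col2a]; exact hg
    obtain ⟨a, ha⟩ := hmem
    have hβb : β b = f'' (α a) := by
      have hββ' : β (β' b') = 0 := by
        have : β' b' ∈ LinearMap.ker β := by rw [row2a]; exact ⟨b', rfl⟩
        exact this
      rw [sq1', ha, map_sub, hββ', sub_zero]
    have haa : a'' = α a := hf'' (by rw [← e2, hβb])
    have : a'' ∈ LinearMap.ker α'' := by rw [row1, haa]; exact ⟨a, rfl⟩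
    rw [← e1]; exact this
  -- totality
  have total : ∀ atl, ftil atl = 0 → ∃ d', δ' d' = 0 ∧ Rel atl d' := by
    intro atl hatl
    obtain ⟨a'', ha''⟩ := hα'' atl
    have hb : f'' a'' ∈ LinearMap.range β := by
      rw [← row2b, LinearMap.mem_ker, ← sq2', ha'', hatl]
    obtain ⟨b, hb⟩ := hb
    have hc : g b ∈ LinearMap.range γ' := by
      rw [← row3a, LinearMap.mem_ker, ← sq4', hb]
      have : f'' a'' ∈ LinearMap.ker g'' := by rw [col3a]; exact ⟨a'', rfl⟩
      exact this
    obtain ⟨c', hc'⟩ := hc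
    refine ⟨h' c', ?_, a'', b, c', ha'', hb, hc', rfl⟩
    rw [← sq6', hc']
    have : g b ∈ LinearMap.ker h := by rw [col2b]; exact ⟨b, rfl⟩
    exact this
  -- surjectivity
  have surj : ∀ d', δ' d' = 0 → ∃ atl, ftil atl = 0 ∧ Rel atl d' := by
    intro d' hd'
    obtain ⟨c', hc'⟩ := hh' d'
    have hhc : h (γ' c') = 0 := by rw [sq6', hc', hd']
    have hmem : γ' c' ∈ LinearMap.range g := by rw [← col2b]; exact hhc
    obtain ⟨b, hb⟩ := hmem
    have hg'' : g'' (β b) = 0 := by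
      rw [sq4', hb]
      have : γ' c' ∈ LinearMap.ker γ := by
        rw [row3a]; exact ⟨c', rfl⟩
      exact this
    have hmem2 : β b ∈ LinearMap.range f'' := by rw [← col3a]; exact hg''
    obtain ⟨a'', ha''⟩ := hmem2
    refine ⟨α'' a'', ?_, a'', b, c', rfl, ha''.symm, hb.symm, hc'⟩
    rw [sq2', ha'']
    have : β b ∈ LinearMap.ker β'' := by rw [row2b]; exact ⟨b, rfl⟩
    exact this
  -- construct the map
  have memker : ∀ x : ↥(LinearMap.ker ftil), ftil ↑x = 0 := fun x => LinearMap.mem_ker.mp x.2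
  let F : ↥(LinearMap.ker ftil) → ↥(LinearMap.ker δ') := fun x =>
    ⟨(total ↑x (memker x)).choose, (total ↑x (memker x)).choose_spec.1⟩
  have hF : ∀ x : ↥(LinearMap.ker ftil), Rel ↑x ↑(F x) := fun x => (total ↑x (memker x)).choose_spec.2
  let φ : ↥(LinearMap.ker ftil) →ₗ[R] ↥(LinearMap.ker δ') :=
    { toFun := F
      map_add' := fun x y => by
        apply Subtype.ext
        exact wd (↑x + ↑y) _ _ (hF (x + y)) (radd ↑x ↑y _ _ (hF x) (hF y))
      map_smul' := fun r x => by
        apply Subtype.ext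
        exact wd (r • (↑x : At)) _ _ (hF (r • x)) (rsmul r ↑x _ (hF x)) }
  have hφbij : Function.Bijective φ := by
    constructor
    · intro x y hxy
      apply Subtype.ext
      have h1 : Rel (↑x + -↑y) (↑(F x) + -↑(F y)) :=
        radd ↑x (-↑y) _ _ (hF x) (rneg ↑y _ (hF y))
      have hFxy : (↑(F x) : D') = ↑(F y) := congrArg Subtype.val hxy
      rw [hFxy] at h1
      have h2 : Rel (↑x + -↑y) 0 := by simpa using h1
      have := inj0 _ h2
      have : (↑x : At) - ↑y = 0 := by simpa [sub_eq_add_neg] using this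
      exact sub_eq_zero.mp this
    · intro d
      obtain ⟨atl, h1, h2⟩ := surj ↑d (LinearMap.mem_ker.mp d.2)
      refine ⟨⟨atl, LinearMap.mem_ker.mpr h1⟩, ?_⟩
      apply Subtype.ext
      exact wd atl _ _ (hF ⟨atl, LinearMap.mem_ker.mpr h1⟩) h2
  exact ⟨LinearEquiv.ofBijective φ hφbij⟩
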